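/- Let n ≥ 1 and let δ, λ ∈ ℝ satisfy λ > δ > 0. Define Γ = (2λ − δ) I + δ 𝟙𝟙ᵀ and Ω = −(1/δ) I + (1/(δ(n+1))) 𝟙𝟙ᵀ, where 𝟙 ∈ ℝⁿ is the all-ones vector. Then every eigenvalue μ ∈ ℂ of the matrix ΓΩ (regarded as a complex n×n matrix) has strictly negative real part, i.e., spec(ΓΩ) ⊂ {z ∈ ℂ : Re z < 0}. -/

import Mathlib

open Matrix

/-- The all-ones matrix `𝟙𝟙ᵀ ∈ ℝ^{n×n}`. -/
def onesMatrix (n : ℕ) : Matrix (Fin n) (Fin n) ℝ := Matrix.of fun _ _ => (1 : ℝ)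

/-- The Cournot externality matrix `Γ = (2λ − δ) I + δ 𝟙𝟙ᵀ`. -/
noncomputable def cournotGamma (n : ℕ) (δ lam : ℝ) : Matrix (Fin n) (Fin n) ℝ :=
  (2 * lam - δ) • (1 : Matrix (Fin n) (Fin n) ℝ) + δ • onesMatrix n

/-- The linear part of the Cournot Nash equilibrium map,
`Ω = −(1/δ) I + (1/(δ(n+1))) 𝟙𝟙ᵀ`. -/
noncomputable def cournotOmega (n : ℕ) (δ : ℝ) : Matrix (Fin n) (Fin n) ℝ :=
  -(1 / δ) • (1 : Matrix (Fin n) (Fin n) ℝ) + (1 / (δ * (n + 1))) • onesMatrix n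

lemma onesMatrix_mul_self (n : ℕ) :
    onesMatrix n * onesMatrix n = (n : ℝ) • onesMatrix n := by
  ext i j
  simp [onesMatrix, Matrix.mul_apply]

lemma gamma_omega_eq (n : ℕ) (δ lam : ℝ) (hδ : 0 < δ) :
    cournotGamma n δ lam * cournotOmega n δ =
      ((δ - 2 * lam) / δ) • (1 : Matrix (Fin n) (Fin n) ℝ)
        + ((2 * lam - 2 * δ) / (δ * (n + 1))) • onesMatrix n := by
  have hδ' : δ ≠ 0 := ne_of_gt hδ
  have hn1 : (n : ℝ) + 1 ≠ 0 := by positivity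
  unfold cournotGamma cournotOmega
  simp only [Matrix.add_mul, Matrix.mul_add, Matrix.smul_mul, Matrix.mul_smul,
    Matrix.one_mul, Matrix.mul_one, onesMatrix_mul_self, smul_smul]
  ext i j
  simp only [Matrix.add_apply, Matrix.smul_apply, Matrix.one_apply, onesMatrix,
    Matrix.of_apply, smul_eq_mul, mul_one]
  by_cases h : i = j <;> simp [h] <;> field_simp <;> ring

/-- Lemma A.2: if `λ > δ > 0` then every complex eigenvalue of `ΓΩ`
has strictly negative real part, i.e. `−ΓΩ` is Hurwitz. -/
theorem cournot_gamma_omega_hurwitz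
    (n : ℕ) (hn : 1 ≤ n) (δ lam : ℝ) (hδ : 0 < δ) (hlam : δ < lam) :
    ∀ μ ∈ spectrum ℂ
        ((cournotGamma n δ lam * cournotOmega n δ).map (algebraMap ℝ ℂ)),
      μ.re < 0 := by
  intro μ hμ
  set α : ℝ := (δ - 2 * lam) / δ with hα
  set β : ℝ := (2 * lam - 2 * δ) / (δ * (n + 1)) with hβ
  have hδ' : δ ≠ 0 := ne_of_gt hδ
  have hn1 : (0:ℝ) < (n : ℝ) + 1 := by positivity
  have hαneg : α < 0 := div_neg_of_neg_of_pos (by linarith) hδ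
  have hsum : α + β * n < 0 := by
    have h1 : α + β * n = (δ - 2 * lam - δ * n) / (δ * (n + 1)) := by
      rw [hα, hβ]
      field_simp
      ring
    rw [h1]
    apply div_neg_of_neg_of_pos
    · have : (0:ℝ) ≤ δ * n := by positivity
      linarith
    · positivity
  rw [gamma_omega_eq n δ lam hδ] at hμ
  have hmap : ((α • (1 : Matrix (Fin n) (Fin n) ℝ) + β • onesMatrix n).map
      (algebraMap ℝ ℂ))
      = (α : ℂ) • (1 : Matrix (Fin n) (Fin n) ℂ)
        + (β : ℂ) • Matrix.of (fun _ _ => (1:ℂ)) := by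
    ext i j
    by_cases h : i = j <;>
      simp [Matrix.map_apply, Matrix.one_apply, onesMatrix, h]
  rw [hmap] at hμ
  rw [spectrum.mem_iff] at hμ
  rw [Algebra.algebraMap_eq_smul_one, Matrix.isUnit_iff_isUnit_det,
    isUnit_iff_ne_zero, not_not, ← Matrix.exists_mulVec_eq_zero_iff] at hμ
  obtain ⟨v, hv0, hv⟩ := hμ
  have key : ∀ i, (μ - α) * v i = β * ∑ j, v j := by
    intro i
    have h := congrFun hv i
    simp only [Matrix.mulVec, dotProduct, Matrix.sub_apply, Matrix.add_apply,
      Matrix.smul_apply, Matrix.one_apply, Matrix.of_apply, smul_eq_mul, mul_one,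
      sub_mul, add_mul, ite_mul, zero_mul, one_mul, mul_ite, mul_zero,
      Finset.sum_sub_distrib, Finset.sum_add_distrib, Finset.sum_ite_eq,
      Finset.mem_univ, if_true, Pi.zero_apply] at h
    rw [← Finset.mul_sum] at h
    linear_combination h
  by_cases hS : (∑ j, v j) = 0
  · obtain ⟨i, hi⟩ := Function.ne_iff.mp hv0
    have h := key i
    rw [hS, mul_zero, mul_eq_zero] at h
    have hμα : μ = (α : ℂ) := by
      rcases h with h | h
      · exact sub_eq_zero.mp h
      · exact absurd h (by simpa using hi)
    rw [hμα]
    simpa using hαneg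
  · have h1 : ∑ i, (μ - (α:ℂ)) * v i = ∑ _i : Fin n, (β:ℂ) * ∑ j, v j :=
      Finset.sum_congr rfl fun i _ => key i
    rw [← Finset.mul_sum, Finset.sum_const, Finset.card_univ, Fintype.card_fin,
      nsmul_eq_mul] at h1
    have h2 : (μ - (α:ℂ)) * (∑ j, v j) = ((β:ℂ) * n) * (∑ j, v j) := by
      linear_combination h1
    have hμeq : μ = (α:ℂ) + (β:ℂ) * n := by
      have := mul_right_cancel₀ hS h2
      linear_combination this
    have hre : μ.re = α + β * n := by
      rw [hμeq, show ((α:ℂ) + (β:ℂ) * n) = (((α + β * (n:ℝ)) : ℝ) : ℂ) by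
        push_cast; ring, Complex.ofReal_re]
    rw [hre]; exact hsum
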